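/- There exists a complete directed graph on 4 vertices {A, B, C, D} with antisymmetric weights (positive edges: B→A weight 1, D→B weight 2, C→D weight 3, A→D weight 4, B→C weight 5, A→C weight 6) such that in the full graph the Schulze order satisfies A > B, but in the induced subgraph on {A, B, C} (and on {A, B}) the Schulze order satisfies B > A. -/

import Mathlib

noncomputable section
open Classical

/-- The minimum weight of an edge along a list of vertices (a walk), `⊤` for walks
with no edges. -/
def pathMin {V : Type*} (w : V → V → ℝ) : List V → EReal
  | a :: b :: rest => min ((w a b : ℝ) : EReal) (pathMin w (b :: rest))
  | _ => ⊤

/-- Beatpath strength in the induced subgraph on `T`: the maximum over directed walks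
from `x` to `y` staying inside `T` of the minimum edge weight on the walk. -/
def beatOn {V : Type*} (w : V → V → ℝ) (T : Set V) (x y : V) : EReal :=
  if x = y then ⊤
  else sSup {m : EReal | ∃ l : List V,
    l.head? = some x ∧ l.getLast? = some y ∧ (∀ v ∈ l, v ∈ T) ∧ m = pathMin w l}

/-- The weighted majority graph of Example 2: vertices `A = 0`, `B = 1`, `C = 2`,
`D = 3`; positive edges `B→A (1)`, `D→B (2)`, `C→D (3)`, `A→D (4)`, `B→C (5)`,
`A→C (6)`, with antisymmetric (negated) reverse edges. -/
def wEx : Fin 4 → Fin 4 → ℝ := fun i j =>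
  match i, j with
  | 1, 0 => 1 | 0, 1 => -1
  | 3, 1 => 2 | 1, 3 => -2
  | 2, 3 => 3 | 3, 2 => -3
  | 0, 3 => 4 | 3, 0 => -4
  | 1, 2 => 5 | 2, 1 => -5
  | 0, 2 => 6 | 2, 0 => -6
  | _, _ => 0

lemma pathMin_key {V : Type*} (w : V → V → ℝ) (y : V) :
    ∀ l : List V, ∀ x, l.head? = some x → l.getLast? = some y → x ≠ y →
      ∃ a ∈ l, a ≠ y ∧ pathMin w l ≤ ((w a y : ℝ) : EReal)
  | [] => by simp
  | [a] => by
      intro x hh hl hxy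
      simp at hh hl
      exact absurd (hh.symm.trans hl) hxy
  | a :: b :: rest => by
      intro x hh hl hxy
      simp at hh
      subst hh
      by_cases hb : b = y
      · subst hb
        exact ⟨a, List.mem_cons_self, hxy, min_le_left _ _⟩
      · have hl' : (b :: rest).getLast? = some y := by
          rwa [List.getLast?_cons_cons] at hl
        obtain ⟨c, hc, hcy, hle⟩ := pathMin_key w y (b :: rest) b rfl hl' hb
        exact ⟨c, List.mem_cons_of_mem _ hc, hcy,
          le_trans (min_le_right ((w a b : ℝ) : EReal) (pathMin w (b :: rest))) hle⟩

/-- In the full graph of Example 2 the Schulze order has `A > B`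
(`B(A,B) > B(B,A)`), but in the induced subgraph on `{A, B, C}`, and also on
`{A, B}`, the Schulze order has `B > A`: beatpath comparisons are not preserved
under vertex deletion. -/
theorem induced_subgraph_counterexample :
    (∀ x y, wEx x y = - wEx y x) ∧
    beatOn wEx Set.univ 1 0 < beatOn wEx Set.univ 0 1 ∧
    beatOn wEx {0, 1, 2} 0 1 < beatOn wEx {0, 1, 2} 1 0 ∧
    beatOn wEx {0, 1} 0 1 < beatOn wEx {0, 1} 1 0 := by
  refine ⟨by intro x y; fin_cases x <;> fin_cases y <;> simp [wEx] <;> norm_num, ?_, ?_, ?_⟩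
  · have hub : beatOn wEx Set.univ 1 0 ≤ ((1 : ℝ) : EReal) := by
      rw [beatOn, if_neg (by decide)]
      refine sSup_le ?_
      rintro m ⟨l, hh, hl, hT, rfl⟩
      obtain ⟨a, _, hay, hle⟩ := pathMin_key wEx 0 l 1 hh hl (by decide)
      refine le_trans hle (EReal.coe_le_coe_iff.mpr ?_)
      fin_cases a <;> simp_all [wEx] <;> norm_num
    have hlb : ((2 : ℝ) : EReal) ≤ beatOn wEx Set.univ 0 1 := by
      rw [beatOn, if_neg (by decide)]
      refine le_trans ?_ (le_sSup ⟨[0, 3, 1], rfl, rfl, by simp, rfl⟩)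
      refine le_min ?_ (le_min ?_ le_top) <;>
        exact EReal.coe_le_coe_iff.mpr (by norm_num [wEx])
    refine lt_of_le_of_lt hub (lt_of_lt_of_le ?_ hlb)
    exact EReal.coe_lt_coe_iff.mpr (by norm_num)
  · have hub : beatOn wEx {0, 1, 2} 0 1 ≤ ((-1 : ℝ) : EReal) := by
      rw [beatOn, if_neg (by decide)]
      refine sSup_le ?_
      rintro m ⟨l, hh, hl, hT, rfl⟩
      obtain ⟨a, haL, hay, hle⟩ := pathMin_key wEx 1 l 0 hh hl (by decide)
      have haT := hT a haL
      refine le_trans hle (EReal.coe_le_coe_iff.mpr ?_)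
      simp only [Set.mem_insert_iff, Set.mem_singleton_iff] at haT
      rcases haT with rfl | rfl | rfl <;> first | exact absurd rfl hay | norm_num [wEx]
    have hlb : ((1 : ℝ) : EReal) ≤ beatOn wEx {0, 1, 2} 1 0 := by
      rw [beatOn, if_neg (by decide)]
      refine le_trans ?_ (le_sSup ⟨[1, 0], rfl, rfl, by simp, rfl⟩)
      exact le_min (EReal.coe_le_coe_iff.mpr (by norm_num [wEx])) le_top
    refine lt_of_le_of_lt hub (lt_of_lt_of_le ?_ hlb)
    exact EReal.coe_lt_coe_iff.mpr (by norm_num)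
  · have hub : beatOn wEx {0, 1} 0 1 ≤ ((-1 : ℝ) : EReal) := by
      rw [beatOn, if_neg (by decide)]
      refine sSup_le ?_
      rintro m ⟨l, hh, hl, hT, rfl⟩
      obtain ⟨a, haL, hay, hle⟩ := pathMin_key wEx 1 l 0 hh hl (by decide)
      have haT := hT a haL
      refine le_trans hle (EReal.coe_le_coe_iff.mpr ?_)
      simp only [Set.mem_insert_iff, Set.mem_singleton_iff] at haT
      rcases haT with rfl | rfl <;> first | exact absurd rfl hay | norm_num [wEx]
    have hlb : ((1 : ℝ) : EReal) ≤ beatOn wEx {0, 1} 1 0 := by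
      rw [beatOn, if_neg (by decide)]
      refine le_trans ?_ (le_sSup ⟨[1, 0], rfl, rfl, by simp, rfl⟩)
      exact le_min (EReal.coe_le_coe_iff.mpr (by norm_num [wEx])) le_top
    refine lt_of_le_of_lt hub (lt_of_lt_of_le ?_ hlb)
    exact EReal.coe_lt_coe_iff.mpr (by norm_num)
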